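/- arXiv:2507.18281 — 2 statements merged into one kernel-verified Lean document; each statement's English description precedes it below -/
import Mathlib

section
/- Let G_RB^k be a partial reduction of a maximal connected graph with C_R ≠ ∅, C_I = ∅ and C_U = ∅. Then every character in C_C is safe, i.e., its realization yields a reducible red-black graph. -/
open Classical

/-- A red-black graph: a bipartite graph on characters `C` and species `S`
with edges colored black or red. -/
structure RBGraph (S C : Type) where
  black : C → S → Prop
  red : C → S → Prop

namespace RBGraph

variable {S C : Type}

/-- `c` and `s` are adjacent (by an edge of either color). -/
def adj (G : RBGraph S C) (c : C) (s : S) : Prop := G.black c s ∨ G.red c s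

/-- The underlying simple graph on `S ⊕ C`. -/
def toSimple (G : RBGraph S C) : SimpleGraph (S ⊕ C) where
  Adj x y := (∃ s c, x = Sum.inl s ∧ y = Sum.inr c ∧ G.adj c s) ∨
             (∃ s c, x = Sum.inr c ∧ y = Sum.inl s ∧ G.adj c s)
  symm := by
    constructor
    rintro x y (⟨s, c, rfl, rfl, h⟩ | ⟨s, c, rfl, rfl, h⟩)
    · exact Or.inr ⟨s, c, rfl, rfl, h⟩
    · exact Or.inl ⟨s, c, rfl, rfl, h⟩
  loopless := by
    constructor
    rintro x (⟨s, c, rfl, h, -⟩ | ⟨s, c, rfl, h, -⟩) <;> simp at h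

/-- `s` lies in the connected component of `c`. -/
def sameComp (G : RBGraph S C) (c : C) (s : S) : Prop :=
  G.toSimple.Reachable (Sum.inr c) (Sum.inl s)

/-- A character is active if it is incident to a red edge. -/
def active (G : RBGraph S C) (c : C) : Prop := ∃ s, G.red c s

/-- A character is inactive if it is incident to no red edge. -/
def inactive (G : RBGraph S C) (c : C) : Prop := ¬ G.active c

/-- A character adjacent via red edges to all species of its connected component. -/
def redUniversal (G : RBGraph S C) (c : C) : Prop :=
  G.active c ∧ ∀ s, G.sameComp c s → G.red c s

/-- Remove all edges of red-universal characters (one round). -/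
def pruneStep (G : RBGraph S C) : RBGraph S C :=
  ⟨fun c s => G.black c s ∧ ¬ G.redUniversal c,
   fun c s => G.red c s ∧ ¬ G.redUniversal c⟩

/-- Repeatedly remove all edges of red-universal characters. -/
def prune [Fintype C] (G : RBGraph S C) : RBGraph S C :=
  pruneStep^[Fintype.card C] G

/-- Realization of a character `c`: add red edges from `c` to the species of its
connected component not adjacent to `c`, delete the black edges of `c`, then
repeatedly remove the edges of red-universal characters. -/
def realize [Fintype C] (G : RBGraph S C) (c : C) : RBGraph S C :=
  prune ⟨fun c' s => G.black c' s ∧ c' ≠ c,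
         fun c' s => G.red c' s ∨ (c' = c ∧ ¬ G.black c s ∧ G.sameComp c s)⟩

/-- Realize a sequence of characters in order. -/
def realizeSeq [Fintype C] (G : RBGraph S C) (l : List C) : RBGraph S C :=
  l.foldl realize G

/-- The graph has no edges. -/
def edgeless (G : RBGraph S C) : Prop := ∀ c s, ¬ G.adj c s

/-- A red Σ-graph: an induced all-red path `s1 - c1 - s2 - c2 - s3`. -/
def redSigma (G : RBGraph S C) : Prop :=
  ∃ (c1 c2 : C) (s1 s2 s3 : S), c1 ≠ c2 ∧ s1 ≠ s2 ∧ s2 ≠ s3 ∧ s1 ≠ s3 ∧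
    G.red c1 s1 ∧ G.red c1 s2 ∧ G.red c2 s2 ∧ G.red c2 s3 ∧
    ¬ G.adj c1 s3 ∧ ¬ G.adj c2 s1

/-- A reduction of a red-black graph: an ordering of its (non-isolated) inactive
characters whose successive realizations yield an edgeless graph, never creating
a red Σ-graph. -/
def isReductionFrom [Fintype C] (G : RBGraph S C) (l : List C) : Prop :=
  l.Nodup ∧ (∀ c, G.inactive c → (∃ s, G.black c s) → c ∈ l) ∧
  (∀ c ∈ l, G.inactive c) ∧
  edgeless (realizeSeq G l) ∧
  ∀ k ≤ l.length, ¬ redSigma (realizeSeq G (l.take k))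

/-- A red-black graph is reducible if it admits a reduction. -/
def reducible [Fintype C] (G : RBGraph S C) : Prop := ∃ l, isReductionFrom G l

/-- A character is safe if its realization yields a reducible red-black graph. -/
def safe [Fintype C] (G : RBGraph S C) (c : C) : Prop := reducible (G.realize c)

/-- The (all-black) red-black graph of a binary species-character matrix. -/
def ofMatrix (M : C → S → Prop) : RBGraph S C := ⟨M, fun _ _ => False⟩

/-- A reduction of the graph of a matrix: an ordering of all characters whose
successive realizations yield an edgeless graph, never creating a red Σ-graph. -/
def isReduction [Fintype C] (M : C → S → Prop) (l : List C) : Prop :=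
  l.Nodup ∧ (∀ c, c ∈ l) ∧ edgeless (realizeSeq (ofMatrix M) l) ∧
  ∀ k ≤ l.length, ¬ redSigma (realizeSeq (ofMatrix M) (l.take k))

/-- The partial reduction after realizing the first `t` characters of `l`. -/
def partialRed [Fintype C] (M : C → S → Prop) (l : List C) (t : ℕ) : RBGraph S C :=
  realizeSeq (ofMatrix M) (l.take t)

/-- The matrix is maximal: no character's species set is contained in that of
another character. -/
def MaximalM (M : C → S → Prop) : Prop :=
  ∀ c1 c2 : C, c1 ≠ c2 → ¬ (∀ s, M c1 s → M c2 s)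

/-- A vertex is non-isolated if it has an incident edge. -/
def nonIsolated (G : RBGraph S C) : S ⊕ C → Prop
  | Sum.inl s => ∃ c, G.adj c s
  | Sum.inr c => ∃ s, G.adj c s

/-- The graph has a single connected component (ignoring isolated vertices). -/
def singleComponent (G : RBGraph S C) : Prop :=
  ∀ x y, G.nonIsolated x → G.nonIsolated y → G.toSimple.Reachable x y

/-- Species incident only to black edges (and at least one of them). -/
def SB (G : RBGraph S C) : Set S := {s | (∃ c, G.black c s) ∧ ∀ c, ¬ G.red c s}

/-- Species incident to at least one red edge. -/
def SR (G : RBGraph S C) : Set S := {s | ∃ c, G.red c s}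

/-- Inactive characters whose neighborhood is contained in `S_R`. -/
def CC (G : RBGraph S C) : Set C :=
  {c | G.inactive c ∧ (∃ s, G.black c s) ∧ ∀ s, G.black c s → s ∈ G.SR}

/-- Inactive characters with a neighbor and a non-neighbor in `S_R`. -/
def CI (G : RBGraph S C) : Set C :=
  {c | G.inactive c ∧ (∃ s ∈ G.SR, G.black c s) ∧ (∃ s ∈ G.SR, ¬ G.black c s)}

/-- Inactive characters with a neighbor in `S_B` that are universal on `S_R`. -/
def CU (G : RBGraph S C) : Set C :=
  {c | G.inactive c ∧ (∃ s ∈ G.SB, G.black c s) ∧ ∀ s ∈ G.SR, G.black c s}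

/-- The subgraph induced by a set of characters and a set of species. -/
def induced (G : RBGraph S C) (Cs : Set C) (Ss : Set S) : RBGraph S C :=
  ⟨fun c s => G.black c s ∧ c ∈ Cs ∧ s ∈ Ss,
   fun c s => G.red c s ∧ c ∈ Cs ∧ s ∈ Ss⟩

/-- `c2` is the center of an induced path on four species and three characters. -/
def isP7Center (M : C → S → Prop) (c2 : C) : Prop :=
  ∃ (c1 c3 : C) (s1 s2 s3 s4 : S),
    c1 ≠ c2 ∧ c2 ≠ c3 ∧ c1 ≠ c3 ∧
    s1 ≠ s2 ∧ s1 ≠ s3 ∧ s1 ≠ s4 ∧ s2 ≠ s3 ∧ s2 ≠ s4 ∧ s3 ≠ s4 ∧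
    M c1 s1 ∧ M c1 s2 ∧ M c2 s2 ∧ M c2 s3 ∧ M c3 s3 ∧ M c3 s4 ∧
    ¬ M c1 s3 ∧ ¬ M c1 s4 ∧ ¬ M c2 s1 ∧ ¬ M c2 s4 ∧ ¬ M c3 s1 ∧ ¬ M c3 s2

/-- Minimum-degree species none of whose characters is the center of an induced `P7`. -/
def S7m (M : C → S → Prop) : Set S :=
  {s | (∀ s', {c | M c s}.ncard ≤ {c | M c s'}.ncard) ∧
       ∀ c, M c s → ¬ isP7Center M c}

/-- The species of `S_B` not adjacent to `cm`. -/
def SBm (G : RBGraph S C) (cm : C) : Set S := {s | s ∈ G.SB ∧ ¬ G.black cm s}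

/-- `C_I` together with the characters of `C_U` with a neighbor in `S_B^m`. -/
def CBm (G : RBGraph S C) (cm : C) : Set C :=
  G.CI ∪ {c ∈ G.CU | ∃ s ∈ G.SBm cm, G.black c s}

end RBGraph


namespace RBGraph

variable {S C : Type}

/-! ### Basic auxiliary notions -/

/-- No black edge at any active character. -/
def NBA (G : RBGraph S C) : Prop := ∀ u s s', G.red u s → ¬ G.black u s'

/-- Every character's neighborhood lies entirely inside or outside `R`. -/
def SRcl (R : Set S) (G : RBGraph S C) : Prop :=
  ∀ u s s', G.adj u s → G.adj u s' → s ∈ R → s' ∈ R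

/-- No red-universal character. -/
def prunedG (G : RBGraph S C) : Prop := ∀ u, ¬ G.redUniversal u

lemma srcl_mono {R : Set S} {G G' : RBGraph S C}
    (hadj : ∀ u s, G'.adj u s → G.adj u s) (h : SRcl R G) : SRcl R G' :=
  fun u s s' a b hs => h u s s' (hadj _ _ a) (hadj _ _ b) hs

lemma pruneStep_black {G : RBGraph S C} {u s} :
    (pruneStep G).black u s ↔ G.black u s ∧ ¬ G.redUniversal u := Iff.rfl

lemma pruneStep_red {G : RBGraph S C} {u s} :
    (pruneStep G).red u s ↔ G.red u s ∧ ¬ G.redUniversal u := Iff.rfl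

lemma pruneStep_adj {G : RBGraph S C} {u s} (h : (pruneStep G).adj u s) : G.adj u s := by
  rcases h with ⟨h, -⟩ | ⟨h, -⟩
  · exact Or.inl h
  · exact Or.inr h

lemma iterate_black {G : RBGraph S C} {u s} :
    ∀ n, (pruneStep^[n] G).black u s → G.black u s := by
  intro n
  induction n generalizing G with
  | zero => exact id
  | succ n ih =>
    rw [Function.iterate_succ_apply]
    exact fun h => (ih h).1

lemma iterate_red {G : RBGraph S C} {u s} :
    ∀ n, (pruneStep^[n] G).red u s → G.red u s := by
  intro n
  induction n generalizing G with
  | zero => exact id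
  | succ n ih =>
    rw [Function.iterate_succ_apply]
    exact fun h => (ih h).1

lemma prune_black [Fintype C] {G : RBGraph S C} {u s} (h : (prune G).black u s) :
    G.black u s := iterate_black _ h

lemma prune_red [Fintype C] {G : RBGraph S C} {u s} (h : (prune G).red u s) :
    G.red u s := iterate_red _ h

lemma realize_black [Fintype C] {G : RBGraph S C} {d u s}
    (h : (realize G d).black u s) : G.black u s ∧ u ≠ d := prune_black h

lemma realize_red [Fintype C] {G : RBGraph S C} {d u s} (h : (realize G d).red u s) :
    G.red u s ∨ (u = d ∧ ¬ G.black d s ∧ G.sameComp d s) := prune_red h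

lemma realizeSeq_black_sub [Fintype C] {u s} :
    ∀ (t : List C) (G : RBGraph S C), (realizeSeq G t).black u s → G.black u s := by
  intro t
  induction t with
  | nil => exact fun G => id
  | cons d t ih => exact fun G h => (realize_black (ih _ h)).1

lemma realizeSeq_black_not [Fintype C] {u : C} {s} :
    ∀ (t : List C) (G : RBGraph S C), u ∈ t → ¬ (realizeSeq G t).black u s := by
  intro t
  induction t with
  | nil => intro G h; simp at h
  | cons d t ih =>
    intro G h hb
    rcases List.mem_cons.mp h with rfl | h
    · exact (realize_black (realizeSeq_black_sub t _ hb)).2 rfl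
    · exact ih _ h hb

lemma realizeSeq_red_not [Fintype C] {u : C} :
    ∀ (t : List C) (G : RBGraph S C), u ∉ t → (∀ s, ¬ G.red u s) →
      ∀ s, ¬ (realizeSeq G t).red u s := by
  intro t
  induction t with
  | nil => exact fun G _ hG => hG
  | cons d t ih =>
    intro G h hG s
    refine ih (realize G d) (fun hm => h (List.mem_cons_of_mem _ hm)) ?_ s
    intro s' hr
    rcases realize_red hr with hr | ⟨rfl, -⟩
    · exact hG s' hr
    · exact h (List.mem_cons_self)

lemma nba_pruneStep {G : RBGraph S C} (h : NBA G) : NBA (pruneStep G) :=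
  fun u s s' hr hb => h u s s' hr.1 hb.1

lemma nba_realize [Fintype C] {G : RBGraph S C} {d} (h : NBA G) : NBA (realize G d) := by
  have hpre : NBA (⟨fun c' s => G.black c' s ∧ c' ≠ d,
      fun c' s => G.red c' s ∨ (c' = d ∧ ¬ G.black d s ∧ G.sameComp d s)⟩ : RBGraph S C) := by
    rintro u s s' (hr | ⟨rfl, -⟩) hb
    · exact h u s s' hr hb.1
    · exact hb.2 rfl
  have : ∀ n, NBA (pruneStep^[n] (⟨fun c' s => G.black c' s ∧ c' ≠ d,
      fun c' s => G.red c' s ∨ (c' = d ∧ ¬ G.black d s ∧ G.sameComp d s)⟩ : RBGraph S C)) := by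
    intro n
    induction n with
    | zero => exact hpre
    | succ n ih => rw [Function.iterate_succ_apply']; exact nba_pruneStep ih
  exact this (Fintype.card C)

lemma nba_realizeSeq [Fintype C] :
    ∀ (t : List C) (G : RBGraph S C), NBA G → NBA (realizeSeq G t) := by
  intro t
  induction t with
  | nil => exact fun G h => h
  | cons d t ih => exact fun G h => ih _ (nba_realize h)

lemma nba_ofMatrix (M : C → S → Prop) : NBA (ofMatrix M) := by
  intro u s s' hr
  exact hr.elim

/-! ### prune reaches a fixpoint -/

lemma pruneStep_eq_self {G : RBGraph S C} (h : ∀ u, ¬ G.redUniversal u) : pruneStep G = G := by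
  cases G with
  | mk b r =>
    unfold pruneStep
    congr 1 <;> funext u s <;> exact propext ⟨fun h' => h'.1, fun h' => ⟨h', h u⟩⟩

lemma iterate_eq_self {G : RBGraph S C} (h : ∀ u, ¬ G.redUniversal u) :
    ∀ n, pruneStep^[n] G = G := by
  intro n
  induction n with
  | zero => rfl
  | succ n ih => rw [Function.iterate_succ_apply, pruneStep_eq_self h, ih]

open Classical in
lemma pruned_iterate [Fintype C] :
    ∀ (n : ℕ) (G : RBGraph S C),
      (Finset.univ.filter (fun u => ∃ s, G.adj u s)).card ≤ n →
      prunedG (pruneStep^[n] G) := by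
  intro n
  induction n with
  | zero =>
    intro G hc
    unfold prunedG
    intro u hu
    have : u ∈ Finset.univ.filter (fun u => ∃ s, G.adj u s) := by
      obtain ⟨s, hs⟩ := hu.1
      exact Finset.mem_filter.mpr ⟨Finset.mem_univ _, ⟨s, Or.inr hs⟩⟩
    rw [Finset.card_eq_zero.mp (Nat.le_zero.mp hc)] at this
    simp at this
  | succ n ih =>
    intro G hc
    by_cases hU : ∃ u, G.redUniversal u
    · obtain ⟨u, hu⟩ := hU
      rw [Function.iterate_succ_apply]
      apply ih
      have hsub : (Finset.univ.filter (fun v => ∃ s, (pruneStep G).adj v s)) ⊆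
          Finset.univ.filter (fun v => ∃ s, G.adj v s) := by
        intro v hv
        obtain ⟨-, s, hs⟩ := Finset.mem_filter.mp hv
        exact Finset.mem_filter.mpr ⟨Finset.mem_univ _, ⟨s, pruneStep_adj hs⟩⟩
      have hmem : u ∈ Finset.univ.filter (fun v => ∃ s, G.adj v s) := by
        obtain ⟨s, hs⟩ := hu.1
        exact Finset.mem_filter.mpr ⟨Finset.mem_univ _, ⟨s, Or.inr hs⟩⟩
      have hnot : u ∉ Finset.univ.filter (fun v => ∃ s, (pruneStep G).adj v s) := by
        intro hmem'
        obtain ⟨-, s, hs⟩ := Finset.mem_filter.mp hmem'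
        rcases hs with ⟨-, h2⟩ | ⟨-, h2⟩ <;> exact h2 hu
      have hlt : (Finset.univ.filter (fun v => ∃ s, (pruneStep G).adj v s)).card <
          (Finset.univ.filter (fun v => ∃ s, G.adj v s)).card :=
        Finset.card_lt_card ⟨hsub, fun h => hnot (h hmem)⟩
      omega
    · push_neg at hU
      rw [iterate_eq_self hU]
      exact fun u => hU u

lemma pruned_prune [Fintype C] (G : RBGraph S C) : prunedG (prune G) := by
  classical
  exact pruned_iterate _ G (Finset.card_le_univ _)

lemma pruned_realize [Fintype C] (G : RBGraph S C) (d : C) : prunedG (realize G d) :=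
  pruned_prune _

/-! ### Reachability helpers -/

lemma reach_closed {G : RBGraph S C} {P : S ⊕ C → Prop}
    (hP : ∀ x y, G.toSimple.Adj x y → P x → P y) :
    ∀ {x y}, G.toSimple.Reachable x y → P x → P y := by
  intro x y h
  obtain ⟨w⟩ := h
  induction w with
  | nil => exact id
  | cons hadj _ ih => exact fun hx => ih (hP _ _ hadj hx)

lemma toSimple_mono {A B : RBGraph S C} (h : ∀ u s, A.adj u s → B.adj u s) :
    A.toSimple ≤ B.toSimple := by
  intro x y hxy
  rcases hxy with ⟨s, u, rfl, rfl, ha⟩ | ⟨s, u, rfl, rfl, ha⟩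
  · exact Or.inl ⟨s, u, rfl, rfl, h u s ha⟩
  · exact Or.inr ⟨s, u, rfl, rfl, h u s ha⟩

lemma reach_high {R : Set S} {G : RBGraph S C} (hcl : SRcl R G) {d : C}
    (hd : ∀ s, G.adj d s → s ∈ R) {s : S} (h : G.sameComp d s) : s ∈ R := by
  have := reach_closed (G := G)
    (P := fun x => match x with
      | Sum.inl s => s ∈ R
      | Sum.inr u => ∀ s, G.adj u s → s ∈ R) ?_ h hd
  · exact this
  · rintro x y (⟨s', u, rfl, rfl, hadj⟩ | ⟨s', u, rfl, rfl, hadj⟩) hx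
    · exact fun s'' h'' => hcl u s' s'' hadj h'' hx
    · exact hx s' hadj

lemma redUniv_of_le {A B : RBGraph S C} {u : C} (hle : A.toSimple ≤ B.toSimple)
    (hred : ∀ s, A.red u s ↔ B.red u s) (h : B.redUniversal u) : A.redUniversal u := by
  obtain ⟨⟨s₀, hs₀⟩, hall⟩ := h
  exact ⟨⟨s₀, (hred s₀).2 hs₀⟩, fun s hs => (hred s).2 (hall s (hs.mono hle))⟩

/-! ### The simulation invariant -/

/-- All of a vertex's (B-)world lies outside `R`. -/
def lowSide (R : Set S) (B : RBGraph S C) : S ⊕ C → Prop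
  | Sum.inl s => s ∉ R
  | Sum.inr u => ∀ s, B.adj u s → s ∉ R

structure Inv (c₀ : C) (R : Set S) (A B : RBGraph S C) (rem : List C) : Prop where
  blackAB : ∀ u s, A.black u s ↔ (B.black u s ∧ u ≠ c₀)
  redAB : ∀ u s, A.red u s → B.red u s
  alive : ∀ u, (∀ s, A.red u s ↔ B.red u s) ∨
    ((∀ s, ¬ A.red u s) ∧ (∀ s, B.red u s → s ∈ R))
  srcA : SRcl R A
  srcB : SRcl R B
  nbaA : NBA A
  nbaB : NBA B
  bfullB : ∀ u s s', B.black u s → s ∈ R → s' ∈ R → B.black u s'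
  cblack : ∀ s, B.black c₀ s → s ∈ R
  cred : ∀ s, ¬ B.red c₀ s
  cfull : c₀ ∈ rem → ∀ s ∈ R, B.black c₀ s
  remred : ∀ d ∈ rem, ∀ s, ¬ B.red d s

namespace Inv

variable {c₀ : C} {R : Set S} {A B : RBGraph S C} {rem : List C}

lemma adjAB (I : Inv c₀ R A B rem) {u s} (h : A.adj u s) : B.adj u s := by
  rcases h with h | h
  · exact Or.inl ((I.blackAB u s).1 h).1
  · exact Or.inr (I.redAB u s h)

lemma le (I : Inv c₀ R A B rem) : A.toSimple ≤ B.toSimple :=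
  toSimple_mono (fun u s => I.adjAB)

lemma adjBA (I : Inv c₀ R A B rem) {u s} (hs : s ∉ R) (h : B.adj u s) : A.adj u s := by
  have hc : u ≠ c₀ := by
    rintro rfl
    rcases h with h | h
    · exact hs (I.cblack s h)
    · exact I.cred s h
  rcases h with h | h
  · exact Or.inl ((I.blackAB u s).2 ⟨h, hc⟩)
  · rcases I.alive u with heq | ⟨-, hR⟩
    · exact Or.inr ((heq s).2 h)
    · exact absurd (hR s h) hs

/-- Walk transfer on the low side. -/
lemma low_reach (I : Inv c₀ R A B rem) {d : C}
    (hd : ∀ s, B.adj d s → s ∉ R) {y}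
    (h : B.toSimple.Reachable (Sum.inr d) y) :
    (lowSide R B y) ∧ A.toSimple.Reachable (Sum.inr d) y := by
  refine reach_closed (G := B)
    (P := fun y => (lowSide R B y) ∧ A.toSimple.Reachable (Sum.inr d) y)
    ?_ h ⟨hd, SimpleGraph.Reachable.refl _⟩
  rintro x y (⟨s, u, rfl, rfl, hadj⟩ | ⟨s, u, rfl, rfl, hadj⟩) ⟨hlx, hre⟩
  · -- x = inl s, y = inr u
    have hs : s ∉ R := hlx
    have hlu : ∀ s', B.adj u s' → s' ∉ R := fun s' hadj' hs'R =>
      hs (I.srcB u s' s hadj' hadj hs'R)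
    have hA : A.adj u s := I.adjBA hs hadj
    exact ⟨hlu, hre.trans (SimpleGraph.Adj.reachable (Or.inl ⟨s, u, rfl, rfl, hA⟩))⟩
  · -- x = inr u, y = inl s
    have hs : s ∉ R := hlx s hadj
    have hA : A.adj u s := I.adjBA hs hadj
    exact ⟨hs, hre.trans (SimpleGraph.Adj.reachable (Or.inr ⟨s, u, rfl, rfl, hA⟩))⟩

/-- Red Σ-graphs transfer from `A` to `B`. -/
lemma sigma (I : Inv c₀ R A B rem) (h : redSigma A) : redSigma B := by
  obtain ⟨c1, c2, s1, s2, s3, hc, h12, h23, h13, r11, r12, r22, r23, na13, na21⟩ := h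
  have e1 : ∀ s, A.red c1 s ↔ B.red c1 s :=
    (I.alive c1).resolve_right (fun h' => h'.1 s1 r11)
  have e2 : ∀ s, A.red c2 s ↔ B.red c2 s :=
    (I.alive c2).resolve_right (fun h' => h'.1 s2 r22)
  refine ⟨c1, c2, s1, s2, s3, hc, h12, h23, h13,
    (e1 _).1 r11, (e1 _).1 r12, (e2 _).1 r22, (e2 _).1 r23, ?_, ?_⟩
  · rintro (hb | hr)
    · exact I.nbaB c1 s1 s3 ((e1 s1).1 r11) hb
    · exact na13 (Or.inr ((e1 s3).2 hr))
  · rintro (hb | hr)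
    · exact I.nbaB c2 s2 s1 ((e2 s2).1 r22) hb
    · exact na21 (Or.inr ((e2 s1).2 hr))

lemma edgeless_transfer (I : Inv c₀ R A B rem) (h : edgeless B) : edgeless A := by
  rintro u s (ha | ha)
  · exact h u s (Or.inl ((I.blackAB u s).1 ha).1)
  · exact h u s (Or.inr (I.redAB u s ha))

/-! ### Preservation under pruning -/

lemma pruneAB (I : Inv c₀ R A B rem) : Inv c₀ R (pruneStep A) (pruneStep B) rem := by
  have keyBA : ∀ u s, A.red u s → B.redUniversal u → A.redUniversal u := by
    intro u s hr hB
    rcases I.alive u with heq | ⟨hAe, -⟩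
    · exact redUniv_of_le I.le heq hB
    · exact absurd hr (hAe s)
  refine ⟨?_, ?_, ?_, ?_, ?_, ?_, ?_, ?_, ?_, ?_, ?_, ?_⟩
  · -- blackAB
    intro u s
    constructor
    · rintro ⟨hb, hnA⟩
      obtain ⟨hb', hne⟩ := (I.blackAB u s).1 hb
      refine ⟨⟨hb', ?_⟩, hne⟩
      intro hB
      obtain ⟨t, ht⟩ := hB.1
      exact I.nbaB u t s ht hb'
    · rintro ⟨⟨hb, hnB⟩, hne⟩
      refine ⟨(I.blackAB u s).2 ⟨hb, hne⟩, ?_⟩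
      intro hA
      obtain ⟨t, ht⟩ := hA.1
      exact I.nbaB u t s (I.redAB u t ht) hb
  · -- redAB
    rintro u s ⟨hr, hnA⟩
    exact ⟨I.redAB u s hr, fun hB => hnA (keyBA u s hr hB)⟩
  · -- alive
    intro u
    by_cases hA : A.redUniversal u <;> by_cases hB : B.redUniversal u
    · left
      intro s
      exact ⟨fun h => absurd hA h.2, fun h => absurd hB h.2⟩
    · -- hA, ¬ hB : A pruned, B not
      right
      refine ⟨fun s h => h.2 hA, ?_⟩
      rintro s ⟨hred, -⟩
      -- show s ∈ R
      rcases I.alive u with heq | ⟨hAe, hR⟩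
      · by_cases hin : ∃ s₁, B.adj u s₁ ∧ s₁ ∈ R
        · obtain ⟨s₁, h₁, h₁R⟩ := hin
          exact I.srcB u s₁ s h₁ (Or.inr hred) h₁R
        · push_neg at hin
          exfalso
          apply hB
          obtain ⟨s₂, hs₂⟩ := hA.1
          refine ⟨⟨s₂, (heq s₂).1 hs₂⟩, ?_⟩
          intro s' hs'
          have hlow := I.low_reach (d := u) (fun t ht => hin t ht) hs'
          exact (heq s').1 (hA.2 s' hlow.2)
      · exact hR s hred
    · -- ¬ hA, hB
      rcases I.alive u with heq | ⟨hAe, hR⟩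
      · exact absurd (redUniv_of_le I.le heq hB) hA
      · left
        intro s
        exact ⟨fun h => absurd h.1 (hAe s), fun h => absurd hB h.2⟩
    · -- neither
      rcases I.alive u with heq | ⟨hAe, hR⟩
      · left
        intro s
        exact ⟨fun h => ⟨(heq s).1 h.1, hB⟩, fun h => ⟨(heq s).2 h.1, hA⟩⟩
      · right
        exact ⟨fun s h => hAe s h.1, fun s h => hR s h.1⟩
  · exact srcl_mono (fun u s => pruneStep_adj) I.srcA
  · exact srcl_mono (fun u s => pruneStep_adj) I.srcB
  · exact nba_pruneStep I.nbaA
  · exact nba_pruneStep I.nbaB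
  · rintro u s s' ⟨hb, hn⟩ hs hs'
    exact ⟨I.bfullB u s s' hb hs hs', hn⟩
  · exact fun s h => I.cblack s h.1
  · exact fun s h => I.cred s h.1
  · intro hc s hs
    refine ⟨I.cfull hc s hs, ?_⟩
    intro hU
    obtain ⟨t, ht⟩ := hU.1
    exact I.cred t ht
  · exact fun d hd s h => I.remred d hd s h.1

lemma pruneA (hBR : ∀ u s, B.red u s → s ∈ R) (I : Inv c₀ R A B rem) :
    Inv c₀ R (pruneStep A) B rem := by
  refine ⟨?_, ?_, ?_, srcl_mono (fun u s => pruneStep_adj) I.srcA, I.srcB,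
    nba_pruneStep I.nbaA, I.nbaB, I.bfullB, I.cblack, I.cred, I.cfull, I.remred⟩
  · intro u s
    constructor
    · rintro ⟨hb, -⟩
      exact (I.blackAB u s).1 hb
    · rintro ⟨hb, hne⟩
      refine ⟨(I.blackAB u s).2 ⟨hb, hne⟩, ?_⟩
      intro hA
      obtain ⟨t, ht⟩ := hA.1
      exact I.nbaB u t s (I.redAB u t ht) hb
  · rintro u s ⟨hr, -⟩
    exact I.redAB u s hr
  · intro u
    by_cases hA : A.redUniversal u
    · right
      exact ⟨fun s h => h.2 hA, hBR u⟩
    · rcases I.alive u with heq | ⟨hAe, hR⟩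
      · left
        intro s
        exact ⟨fun h => (heq s).1 h.1, fun h => ⟨(heq s).2 h, hA⟩⟩
      · right
        exact ⟨fun s h => hAe s h.1, hR⟩

lemma pruneB (hA : prunedG A) (I : Inv c₀ R A B rem) :
    Inv c₀ R A (pruneStep B) rem := by
  refine ⟨?_, ?_, ?_, I.srcA, srcl_mono (fun u s => pruneStep_adj) I.srcB,
    I.nbaA, nba_pruneStep I.nbaB, ?_, fun s h => I.cblack s h.1,
    fun s h => I.cred s h.1, ?_, fun d hd s h => I.remred d hd s h.1⟩
  · intro u s
    constructor
    · intro hb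
      obtain ⟨hb', hne⟩ := (I.blackAB u s).1 hb
      refine ⟨⟨hb', ?_⟩, hne⟩
      intro hB
      obtain ⟨t, ht⟩ := hB.1
      exact I.nbaB u t s ht hb'
    · rintro ⟨⟨hb, -⟩, hne⟩
      exact (I.blackAB u s).2 ⟨hb, hne⟩
  · intro u s hr
    refine ⟨I.redAB u s hr, ?_⟩
    intro hB
    rcases I.alive u with heq | ⟨hAe, -⟩
    · exact hA u (redUniv_of_le I.le heq hB)
    · exact hAe s hr
  · intro u
    by_cases hB : B.redUniversal u
    · rcases I.alive u with heq | ⟨hAe, hR⟩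
      · exact absurd (redUniv_of_le I.le heq hB) (hA u)
      · left
        intro s
        exact ⟨fun h => absurd h (hAe s), fun h => absurd hB h.2⟩
    · rcases I.alive u with heq | ⟨hAe, hR⟩
      · left
        intro s
        exact ⟨fun h => ⟨(heq s).1 h, hB⟩, fun h => (heq s).2 h.1⟩
      · right
        exact ⟨hAe, fun s h => hR s h.1⟩
  · rintro u s s' ⟨hb, hn⟩ hs hs'
    exact ⟨I.bfullB u s s' hb hs hs', hn⟩
  · intro hc s hs
    refine ⟨I.cfull hc s hs, ?_⟩
    intro hU
    obtain ⟨t, ht⟩ := hU.1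
    exact I.cred t ht

lemma aliveB (I : Inv c₀ R A B rem) : ∀ u, (∀ s, A.red u s ↔ B.red u s) ∨
    ((∀ s, ¬ A.red u s) ∧ (∀ s, B.red u s → s ∈ R)) := I.alive

lemma pruneABIter (I : Inv c₀ R A B rem) :
    ∀ n, Inv c₀ R (pruneStep^[n] A) (pruneStep^[n] B) rem := by
  intro n
  induction n generalizing A B with
  | zero => exact I
  | succ n ih =>
    rw [Function.iterate_succ_apply, Function.iterate_succ_apply]
    exact ih I.pruneAB

lemma pruneAIter (hBR : ∀ u s, B.red u s → s ∈ R) (I : Inv c₀ R A B rem) :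
    ∀ n, Inv c₀ R (pruneStep^[n] A) B rem := by
  intro n
  induction n generalizing A with
  | zero => exact I
  | succ n ih =>
    rw [Function.iterate_succ_apply]
    exact ih (I.pruneA hBR)

lemma pruneBIter (hA : prunedG A) (I : Inv c₀ R A B rem) :
    ∀ n, Inv c₀ R A (pruneStep^[n] B) rem := by
  intro n
  induction n generalizing B with
  | zero => exact I
  | succ n ih =>
    rw [Function.iterate_succ_apply]
    exact ih (I.pruneB hA)

/-! ### Preservation under realization steps -/

/-- The step where the original run realizes `c₀` and the new run skips. -/
lemma realizeC [Fintype C] {t : List C} (I : Inv c₀ R A B (c₀ :: t))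
    (hA : prunedG A) (hnd : c₀ ∉ t) : Inv c₀ R A (realize B c₀) t := by
  have hstar : ∀ s, ¬ (¬ B.black c₀ s ∧ B.sameComp c₀ s) := by
    rintro s ⟨hnb, hsc⟩
    have hside : ∀ s', B.adj c₀ s' → s' ∈ R := by
      rintro s' (hb | hr)
      · exact I.cblack s' hb
      · exact absurd hr (I.cred s')
    exact hnb (I.cfull (List.mem_cons_self) s (reach_high I.srcB hside hsc))
  have I₁ : Inv c₀ R A (⟨fun c' s => B.black c' s ∧ c' ≠ c₀,
      fun c' s => B.red c' s ∨ (c' = c₀ ∧ ¬ B.black c₀ s ∧ B.sameComp c₀ s)⟩ :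
        RBGraph S C) t := by
    have hadj : ∀ u s, (⟨fun c' s => B.black c' s ∧ c' ≠ c₀,
        fun c' s => B.red c' s ∨ (c' = c₀ ∧ ¬ B.black c₀ s ∧ B.sameComp c₀ s)⟩ :
          RBGraph S C).adj u s → B.adj u s := by
      rintro u s (⟨hb, -⟩ | (hr | ⟨rfl, hst⟩))
      · exact Or.inl hb
      · exact Or.inr hr
      · exact absurd hst (hstar s)
    refine ⟨?_, ?_, ?_, I.srcA, srcl_mono hadj I.srcB, I.nbaA, ?_, ?_, ?_, ?_, ?_, ?_⟩
    · intro u s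
      rw [I.blackAB u s]
      constructor
      · rintro ⟨hb, hne⟩; exact ⟨⟨hb, hne⟩, hne⟩
      · rintro ⟨⟨hb, hne⟩, -⟩; exact ⟨hb, hne⟩
    · intro u s hr
      exact Or.inl (I.redAB u s hr)
    · intro u
      rcases I.alive u with heq | ⟨hAe, hR⟩
      · left
        intro s
        rw [heq s]
        constructor
        · exact Or.inl
        · rintro (hr | ⟨rfl, hst⟩)
          · exact hr
          · exact absurd hst (hstar s)
      · right
        refine ⟨hAe, ?_⟩
        rintro s (hr | ⟨rfl, hst⟩)
        · exact hR s hr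
        · exact absurd hst (hstar s)
    · -- NBA of pre-B
      rintro u s s' (hr | ⟨rfl, hst⟩) hb
      · exact I.nbaB u s s' hr hb.1
      · exact absurd hst (hstar s)
    · rintro u s s' ⟨hb, hne⟩ hs hs'
      exact ⟨I.bfullB u s s' hb hs hs', hne⟩
    · exact fun s h => I.cblack s h.1
    · rintro s (hr | ⟨-, hst⟩)
      · exact I.cred s hr
      · exact hstar s hst
    · intro hc
      exact absurd hc hnd
    · rintro d hd s (hr | ⟨rfl, -⟩)
      · exact I.remred d (List.mem_cons_of_mem _ hd) s hr
      · exact hnd hd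
  exact I₁.pruneBIter hA (Fintype.card C)

/-- The joint step where both runs realize `d ≠ c₀`. -/
lemma realizeD [Fintype C] {t : List C} {d : C} (I : Inv c₀ R A B (d :: t))
    (hdc : d ≠ c₀) (hnd : d ∉ t) : Inv c₀ R (realize A d) (realize B d) t := by
  have hdredB : ∀ s, ¬ B.red d s := I.remred d (List.mem_cons_self)
  have hdredA : ∀ s, ¬ A.red d s := fun s h => hdredB s (I.redAB _ _ h)
  -- star analysis
  have hcase : (∀ s, ¬ (¬ A.black d s ∧ A.sameComp d s) ∧
      ¬ (¬ B.black d s ∧ B.sameComp d s)) ∨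
      ((∀ s, (¬ A.black d s ∧ A.sameComp d s) ↔ (¬ B.black d s ∧ B.sameComp d s)) ∧
       (∀ s, (¬ B.black d s ∧ B.sameComp d s) → s ∉ R)) := by
    by_cases hin : ∃ s₀, B.black d s₀ ∧ s₀ ∈ R
    · left
      obtain ⟨s₀, hb₀, hR₀⟩ := hin
      have hside : ∀ s', B.adj d s' → s' ∈ R :=
        fun s' h' => I.srcB d s₀ s' (Or.inl hb₀) h' hR₀
      intro s
      constructor
      · rintro ⟨hnb, hsc⟩
        have hsR : s ∈ R := reach_high I.srcB hside (hsc.mono I.le)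
        exact hnb ((I.blackAB d s).2 ⟨I.bfullB d s₀ s hb₀ hR₀ hsR, hdc⟩)
      · rintro ⟨hnb, hsc⟩
        exact hnb (I.bfullB d s₀ s hb₀ hR₀ (reach_high I.srcB hside hsc))
    · push_neg at hin
      right
      have hlowB : ∀ s', B.adj d s' → s' ∉ R := by
        rintro s' (hb | hr)
        · exact hin s' hb
        · exact absurd hr (hdredB s')
      constructor
      · intro s
        constructor
        · rintro ⟨hnb, hsc⟩
          exact ⟨fun hb => hnb ((I.blackAB d s).2 ⟨hb, hdc⟩), hsc.mono I.le⟩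
        · rintro ⟨hnb, hsc⟩
          have h' := I.low_reach hlowB hsc
          exact ⟨fun hb => hnb (((I.blackAB d s).1 hb).1), h'.2⟩
      · rintro s ⟨-, hsc⟩
        exact (I.low_reach hlowB hsc).1
  have hstar : ∀ s, (¬ A.black d s ∧ A.sameComp d s) ↔
      (¬ B.black d s ∧ B.sameComp d s) := by
    rcases hcase with h | ⟨h, -⟩
    · intro s
      exact ⟨fun h' => absurd h' (h s).1, fun h' => absurd h' (h s).2⟩
    · exact h
  have I₁ : Inv c₀ R
      (⟨fun c' s => A.black c' s ∧ c' ≠ d,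
        fun c' s => A.red c' s ∨ (c' = d ∧ ¬ A.black d s ∧ A.sameComp d s)⟩ : RBGraph S C)
      (⟨fun c' s => B.black c' s ∧ c' ≠ d,
        fun c' s => B.red c' s ∨ (c' = d ∧ ¬ B.black d s ∧ B.sameComp d s)⟩ : RBGraph S C)
      t := by
    refine ⟨?_, ?_, ?_, ?_, ?_, ?_, ?_, ?_, ?_, ?_, ?_, ?_⟩
    · intro u s
      show (A.black u s ∧ u ≠ d) ↔ ((B.black u s ∧ u ≠ d) ∧ u ≠ c₀)
      rw [I.blackAB u s]
      tauto
    · rintro u s (hr | ⟨rfl, hst⟩)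
      · exact Or.inl (I.redAB u s hr)
      · exact Or.inr ⟨rfl, (hstar s).1 hst⟩
    · intro u
      by_cases hud : u = d
      · subst hud
        left
        intro s
        constructor
        · rintro (hr | ⟨-, hst⟩)
          · exact absurd hr (hdredA s)
          · exact Or.inr ⟨rfl, (hstar s).1 hst⟩
        · rintro (hr | ⟨-, hst⟩)
          · exact absurd hr (hdredB s)
          · exact Or.inr ⟨rfl, (hstar s).2 hst⟩
      · rcases I.alive u with heq | ⟨hAe, hR⟩
        · left
          intro s
          constructor
          · rintro (hr | ⟨h, -⟩)
            · exact Or.inl ((heq s).1 hr)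
            · exact absurd h hud
          · rintro (hr | ⟨h, -⟩)
            · exact Or.inl ((heq s).2 hr)
            · exact absurd h hud
        · right
          constructor
          · rintro s (hr | ⟨h, -⟩)
            · exact hAe s hr
            · exact hud h
          · rintro s (hr | ⟨h, -⟩)
            · exact hR s hr
            · exact absurd h hud
    · -- srcA of pre
      intro u s s' ha ha' hs
      by_cases hud : u = d
      · subst hud
        exfalso
        have hstA : ∀ s'', (⟨fun c' s => A.black c' s ∧ c' ≠ u,
            fun c' s => A.red c' s ∨ (c' = u ∧ ¬ A.black u s ∧ A.sameComp u s)⟩ :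
              RBGraph S C).adj u s'' → (¬ A.black u s'' ∧ A.sameComp u s'') := by
          rintro s'' (⟨-, hne⟩ | (hr | ⟨-, hst⟩))
          · exact absurd rfl hne
          · exact absurd hr (hdredA s'')
          · exact hst
        rcases hcase with h | ⟨-, h⟩
        · exact (h s).1 (hstA s ha)
        · exact h s ((hstar s).1 (hstA s ha)) hs
      · have hsub : ∀ s'', (⟨fun c' s => A.black c' s ∧ c' ≠ d,
            fun c' s => A.red c' s ∨ (c' = d ∧ ¬ A.black d s ∧ A.sameComp d s)⟩ :
              RBGraph S C).adj u s'' → A.adj u s'' := by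
          rintro s'' (⟨hb, -⟩ | (hr | ⟨h, -⟩))
          · exact Or.inl hb
          · exact Or.inr hr
          · exact absurd h hud
        exact I.srcA u s s' (hsub s ha) (hsub s' ha') hs
    · -- srcB of pre
      intro u s s' ha ha' hs
      by_cases hud : u = d
      · subst hud
        exfalso
        have hstB : ∀ s'', (⟨fun c' s => B.black c' s ∧ c' ≠ u,
            fun c' s => B.red c' s ∨ (c' = u ∧ ¬ B.black u s ∧ B.sameComp u s)⟩ :
              RBGraph S C).adj u s'' → (¬ B.black u s'' ∧ B.sameComp u s'') := by
          rintro s'' (⟨-, hne⟩ | (hr | ⟨-, hst⟩))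
          · exact absurd rfl hne
          · exact absurd hr (hdredB s'')
          · exact hst
        rcases hcase with h | ⟨-, h⟩
        · exact (h s).2 (hstB s ha)
        · exact h s (hstB s ha) hs
      · have hsub : ∀ s'', (⟨fun c' s => B.black c' s ∧ c' ≠ d,
            fun c' s => B.red c' s ∨ (c' = d ∧ ¬ B.black d s ∧ B.sameComp d s)⟩ :
              RBGraph S C).adj u s'' → B.adj u s'' := by
          rintro s'' (⟨hb, -⟩ | (hr | ⟨h, -⟩))
          · exact Or.inl hb
          · exact Or.inr hr
          · exact absurd h hud
        exact I.srcB u s s' (hsub s ha) (hsub s' ha') hs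
    · -- nbaA of pre
      rintro u s s' (hr | ⟨rfl, -⟩) hb
      · exact I.nbaA u s s' hr hb.1
      · exact hb.2 rfl
    · -- nbaB of pre
      rintro u s s' (hr | ⟨rfl, -⟩) hb
      · exact I.nbaB u s s' hr hb.1
      · exact hb.2 rfl
    · rintro u s s' ⟨hb, hne⟩ hs hs'
      exact ⟨I.bfullB u s s' hb hs hs', hne⟩
    · exact fun s h => I.cblack s h.1
    · rintro s (hr | ⟨h, -⟩)
      · exact I.cred s hr
      · exact hdc h.symm
    · intro hc s hs
      exact ⟨I.cfull (List.mem_cons_of_mem _ hc) s hs, fun h => hdc h.symm⟩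
    · rintro e he s (hr | ⟨rfl, -⟩)
      · exact I.remred e (List.mem_cons_of_mem _ he) s hr
      · exact hnd he
  exact I₁.pruneABIter (Fintype.card C)

end Inv

/-! ### Main simulation -/

lemma realizeSeq_cons [Fintype C] (G : RBGraph S C) (d : C) (t : List C) :
    realizeSeq G (d :: t) = realizeSeq (realize G d) t := rfl

open Classical in
lemma main_sim [Fintype C] (c₀ : C) (R : Set S) :
    ∀ (m : List C) (A B : RBGraph S C), Inv c₀ R A B m → prunedG A → m.Nodup →
      (∀ i, ¬ redSigma (realizeSeq B (m.take i))) → edgeless (realizeSeq B m) →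
      edgeless (realizeSeq A (m.filter (· ≠ c₀))) ∧
      (∀ i, ¬ redSigma (realizeSeq A ((m.filter (· ≠ c₀)).take i))) := by
  intro m
  induction m with
  | nil =>
    intro A B I hA _ hsig hel
    refine ⟨I.edgeless_transfer hel, ?_⟩
    intro i h
    exact hsig 0 (I.sigma (by simpa [realizeSeq] using h))
  | cons d t ih =>
    intro A B I hA hnd hsig hel
    have hd : d ∉ t := (List.nodup_cons.mp hnd).1
    have ht : t.Nodup := (List.nodup_cons.mp hnd).2
    by_cases hdc : d = c₀
    · subst hdc
      have I' := I.realizeC hA hd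
      have hres := ih A (realize B d) I' hA ht
        (fun i => by
          have := hsig (i + 1)
          rwa [List.take_succ_cons, realizeSeq_cons] at this)
        (by rwa [realizeSeq_cons] at hel)
      have hf : (d :: t).filter (· ≠ d) = t.filter (· ≠ d) := by
        simp [List.filter_cons]
      rw [hf]
      exact hres
    · have I' := I.realizeD (fun h => hdc h) hd
      have hA' : prunedG (realize A d) := pruned_realize _ _
      have hres := ih (realize A d) (realize B d) I' hA' ht
        (fun i => by
          have := hsig (i + 1)
          rwa [List.take_succ_cons, realizeSeq_cons] at this)
        (by rwa [realizeSeq_cons] at hel)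
      have hf : (d :: t).filter (· ≠ c₀) = d :: t.filter (· ≠ c₀) := by
        simp [List.filter_cons, hdc]
      rw [hf]
      constructor
      · rw [realizeSeq_cons]
        exact hres.1
      · intro i
        match i with
        | 0 =>
          intro h
          exact hsig 0 (I.sigma (by simpa [realizeSeq] using h))
        | Nat.succ i =>
          rw [List.take_succ_cons, realizeSeq_cons]
          exact hres.2 i

lemma realizeSeq_append [Fintype C] (G : RBGraph S C) (t₁ t₂ : List C) :
    realizeSeq G (t₁ ++ t₂) = realizeSeq (realizeSeq G t₁) t₂ := by
  unfold realizeSeq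
  rw [List.foldl_append]

end RBGraph

/-- if `C_R ≠ ∅`, `C_I = ∅` and `C_U = ∅`, every character of `C_C`
is safe. -/
theorem CC_safe {S C : Type} [Fintype C] (M : C → S → Prop)
    (hmax : RBGraph.MaximalM M) (hconn : (RBGraph.ofMatrix M).toSimple.Connected)
    (l : List C) (hl : RBGraph.isReduction M l) (k : ℕ) (hk : k ≤ l.length)
    (Gk : RBGraph S C) (hGk : Gk = RBGraph.partialRed M l k)
    (hCR : ∃ c, Gk.active c) (hCI : Gk.CI = ∅) (hCU : Gk.CU = ∅) :
    ∀ c ∈ Gk.CC, Gk.safe c := by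
  classical
  subst hGk
  intro c hc
  obtain ⟨hcin, ⟨s₀, hbs₀⟩, hcsub⟩ := hc
  set Gk := RBGraph.partialRed M l k with hGkdef
  set R := Gk.SR with hRdef
  -- basic facts
  have hnba : RBGraph.NBA Gk :=
    RBGraph.nba_realizeSeq (l.take k) _ (RBGraph.nba_ofMatrix M)
  have hsrcl : RBGraph.SRcl R Gk := by
    intro u s s' ha ha' hs
    by_cases hact : Gk.active u
    · obtain ⟨t, ht⟩ := hact
      rcases ha' with hb | hr
      · exact absurd hb (hnba u t s' ht)
      · exact ⟨u, hr⟩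
    · have hured : ∀ t, ¬ Gk.red u t := fun t h => hact ⟨t, h⟩
      rcases ha' with hb' | hr'
      · by_contra hs'
        rcases ha with hb | hr
        · have hSB : s' ∈ Gk.SB := ⟨⟨u, hb'⟩, fun v hv => hs' ⟨v, hv⟩⟩
          by_cases hall : ∀ t ∈ Gk.SR, Gk.black u t
          · have : u ∈ Gk.CU := ⟨hact, ⟨s', hSB, hb'⟩, hall⟩
            rw [hCU] at this
            exact this
          · push_neg at hall
            obtain ⟨t, htR, htn⟩ := hall
            have : u ∈ Gk.CI := ⟨hact, ⟨s, hs, hb⟩, ⟨t, htR, htn⟩⟩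
            rw [hCI] at this
            exact this
        · exact absurd hr (hured s)
      · exact absurd hr' (hured s')
  have hbfull : ∀ u s s', Gk.black u s → s ∈ R → s' ∈ R → Gk.black u s' := by
    intro u s s' hb hs hs'
    by_cases hact : Gk.active u
    · obtain ⟨t, ht⟩ := hact
      exact absurd hb (hnba u t s ht)
    · by_contra hnb
      have : u ∈ Gk.CI := ⟨hact, ⟨s, hs, hb⟩, ⟨s', hs', hnb⟩⟩
      rw [hCI] at this
      exact this
  have hcfull : ∀ s, s ∈ R → Gk.black c s :=
    fun s hs => hbfull c s₀ s hbs₀ (hcsub s₀ hbs₀) hs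
  have hcadj : ∀ s, Gk.adj c s → s ∈ R := by
    rintro s (hb | hr)
    · exact hcsub s hb
    · exact absurd ⟨s, hr⟩ hcin
  have hstar0 : ∀ s, ¬ (¬ Gk.black c s ∧ Gk.sameComp c s) := by
    rintro s ⟨hnb, hsc⟩
    exact hnb (hcfull s (RBGraph.reach_high hsrcl hcadj hsc))
  set m := l.drop k with hmdef
  have hmnd : m.Nodup := hl.1.sublist (List.drop_sublist k l)
  have hdisj : ∀ d ∈ m, d ∉ l.take k := by
    intro d hdm hdt
    have hnd := hl.1
    rw [← List.take_append_drop k l] at hnd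
    exact (List.nodup_append'.mp hnd).2.2 hdt hdm
  have hremred : ∀ d ∈ m, ∀ s, ¬ Gk.red d s := by
    intro d hdm s
    exact RBGraph.realizeSeq_red_not (l.take k) (RBGraph.ofMatrix M) (hdisj d hdm)
      (fun s h => h) s
  -- initial invariant
  have hRred : ∀ u s, Gk.red u s → s ∈ R := fun u s h => ⟨u, h⟩
  have I₀ : RBGraph.Inv c R
      (⟨fun c' s => Gk.black c' s ∧ c' ≠ c,
        fun c' s => Gk.red c' s ∨ (c' = c ∧ ¬ Gk.black c s ∧ Gk.sameComp c s)⟩ :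
          RBGraph S C) Gk m := by
    have hadjsub : ∀ u s, (⟨fun c' s => Gk.black c' s ∧ c' ≠ c,
        fun c' s => Gk.red c' s ∨ (c' = c ∧ ¬ Gk.black c s ∧ Gk.sameComp c s)⟩ :
          RBGraph S C).adj u s → Gk.adj u s := by
      rintro u s (⟨hb, -⟩ | (hr | ⟨rfl, hst⟩))
      · exact Or.inl hb
      · exact Or.inr hr
      · exact absurd hst (hstar0 s)
    refine ⟨fun u s => Iff.rfl, ?_, ?_, RBGraph.srcl_mono hadjsub hsrcl, hsrcl,
      ?_, hnba, hbfull, fun s h => hcsub s h, fun s h => hcin ⟨s, h⟩,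
      fun _ => hcfull, hremred⟩
    · rintro u s (hr | ⟨rfl, hst⟩)
      · exact hr
      · exact absurd hst (hstar0 s)
    · intro u
      left
      intro s
      constructor
      · rintro (hr | ⟨rfl, hst⟩)
        · exact hr
        · exact absurd hst (hstar0 s)
      · exact Or.inl
    · rintro u s s' (hr | ⟨rfl, hst⟩) hb
      · exact hnba u s s' hr hb.1
      · exact absurd hst (hstar0 s)
  have IH0 : RBGraph.Inv c R (Gk.realize c) Gk m :=
    I₀.pruneAIter hRred (Fintype.card C)
  have hprA : RBGraph.prunedG (Gk.realize c) := RBGraph.pruned_realize Gk c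
  -- facts about the original run
  have hseq : ∀ i, RBGraph.realizeSeq Gk (m.take i) =
      RBGraph.realizeSeq (RBGraph.ofMatrix M) (l.take k ++ m.take i) := by
    intro i
    rw [RBGraph.realizeSeq_append]
    rfl
  have htake : ∀ i, l.take k ++ m.take i = l.take (k + i) := by
    intro i
    rw [List.take_add]
  have hsigB : ∀ i, ¬ RBGraph.redSigma (RBGraph.realizeSeq Gk (m.take i)) := by
    have haux : ∀ i, i ≤ m.length →
        ¬ RBGraph.redSigma (RBGraph.realizeSeq Gk (m.take i)) := by
      intro i hi
      rw [hseq i, htake i]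
      apply hl.2.2.2
      have : m.length = l.length - k := List.length_drop
      omega
    intro i
    by_cases hi : i ≤ m.length
    · exact haux i hi
    · push_neg at hi
      rw [List.take_of_length_le hi.le]
      rw [← List.take_length (l := m)]
      exact haux m.length le_rfl
  have helB : RBGraph.edgeless (RBGraph.realizeSeq Gk m) := by
    have : RBGraph.realizeSeq Gk m = RBGraph.realizeSeq (RBGraph.ofMatrix M) l := by
      have := RBGraph.realizeSeq_append (RBGraph.ofMatrix M) (l.take k) (l.drop k)
      rw [List.take_append_drop] at this
      exact this.symm
    rw [this]
    exact hl.2.2.1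
  obtain ⟨hEL, hSIG⟩ :=
    RBGraph.main_sim c R m (Gk.realize c) Gk IH0 hprA hmnd hsigB helB
  refine ⟨m.filter (· ≠ c), hmnd.filter _, ?_, ?_, hEL, fun i _ => hSIG i⟩
  · -- completeness
    intro e hein ⟨s, hbe⟩
    have h1 : Gk.black e s ∧ e ≠ c := RBGraph.realize_black hbe
    have h2 : e ∈ l := hl.2.1 e
    have h3 : e ∉ l.take k := by
      intro hmem
      exact RBGraph.realizeSeq_black_not (l.take k) (RBGraph.ofMatrix M) hmem h1.1
    have h4 : e ∈ m := by
      rw [← List.take_append_drop k l] at h2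
      exact (List.mem_append.mp h2).resolve_left h3
    rw [List.mem_filter]
    exact ⟨h4, by simpa using h1.2⟩
  · -- members inactive
    intro e hef
    obtain ⟨hem, hec⟩ := List.mem_filter.mp hef
    rintro ⟨s, hre⟩
    rcases RBGraph.realize_red hre with hr | ⟨rfl, -⟩
    · exact hremred e hem s hr
    · simp at hec
end

section
/- In a connected red-black partial reduction G_RB^k, every active character was, before its realization, adjacent to every species in S_B(G_RB^k) (the species currently incident only to black edges). -/
open Classical

namespace RBGraph

variable {S C : Type}

lemma aux_toSimple_adj_cases {G : RBGraph S C} {x y : S ⊕ C}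
    (h : G.toSimple.Adj x y) :
    (∃ s c, x = Sum.inl s ∧ y = Sum.inr c ∧ G.adj c s) ∨
      (∃ s c, x = Sum.inr c ∧ y = Sum.inl s ∧ G.adj c s) := h

lemma aux_toSimple_le {G H : RBGraph S C} (h : ∀ c s, H.adj c s → G.adj c s) :
    H.toSimple ≤ G.toSimple := by
  rintro x y (⟨s, c, rfl, rfl, ha⟩ | ⟨s, c, rfl, rfl, ha⟩)
  · exact Or.inl ⟨s, c, rfl, rfl, h _ _ ha⟩
  · exact Or.inr ⟨s, c, rfl, rfl, h _ _ ha⟩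

lemma aux_not_reach_of_edgeless (G : RBGraph S C) (c : C)
    (h : ∀ s', ¬ G.adj c s') (s : S) :
    ¬ G.toSimple.Reachable (Sum.inr c) (Sum.inl s) := by
  rintro ⟨w⟩
  cases w with
  | cons hadj _ =>
    rcases hadj with ⟨s', c', h1, _, ha⟩ | ⟨s', c', h1, _, ha⟩
    · simp at h1
    · rw [Sum.inr.injEq] at h1
      exact h s' (h1 ▸ ha)

lemma aux_reach_of_adj_reach {G H : RBGraph S C}
    (h : ∀ x y, H.toSimple.Adj x y → G.toSimple.Reachable x y) :
    ∀ x y, H.toSimple.Reachable x y → G.toSimple.Reachable x y := by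
  rintro x y ⟨w⟩
  induction w with
  | nil => exact SimpleGraph.Reachable.refl _
  | cons hadj _ ih => exact (h _ _ hadj).trans ih

lemma aux_pruneStep_black {G : RBGraph S C} {c s} (h : (pruneStep G).black c s) :
    G.black c s := h.1

lemma aux_pruneStep_red {G : RBGraph S C} {c s} (h : (pruneStep G).red c s) :
    G.red c s := h.1

lemma aux_pruneStep_adj {G : RBGraph S C} {c s} (h : (pruneStep G).adj c s) :
    G.adj c s := h.imp aux_pruneStep_black aux_pruneStep_red

lemma aux_iter_black {G : RBGraph S C} {c s} (n : ℕ)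
    (h : (pruneStep^[n] G).black c s) : G.black c s := by
  induction n with
  | zero => exact h
  | succ n ih =>
      rw [Function.iterate_succ_apply'] at h
      exact ih (aux_pruneStep_black h)

lemma aux_iter_red {G : RBGraph S C} {c s} (n : ℕ)
    (h : (pruneStep^[n] G).red c s) : G.red c s := by
  induction n with
  | zero => exact h
  | succ n ih =>
      rw [Function.iterate_succ_apply'] at h
      exact ih (aux_pruneStep_red h)

lemma aux_iter_adj {G : RBGraph S C} {c s} (n : ℕ)
    (h : (pruneStep^[n] G).adj c s) : G.adj c s :=
  h.imp (aux_iter_black n) (aux_iter_red n)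

variable [Fintype C]

lemma aux_prune_black {G : RBGraph S C} {c s} (h : (prune G).black c s) :
    G.black c s := aux_iter_black _ h

lemma aux_prune_red {G : RBGraph S C} {c s} (h : (prune G).red c s) :
    G.red c s := aux_iter_red _ h

lemma aux_realize_black {G : RBGraph S C} {a : C} {c s}
    (h : (realize G a).black c s) : G.black c s :=
  (aux_prune_black h).1

lemma aux_realize_red {G : RBGraph S C} {a : C} {c s}
    (h : (realize G a).red c s) : G.red c s ∨ c = a := by
  rcases aux_prune_red h with h' | ⟨h1, _, _⟩
  · exact Or.inl h'
  · exact Or.inr h1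

lemma aux_realizeSeq_black {G : RBGraph S C} {c s} (l' : List C)
    (h : (realizeSeq G l').black c s) : G.black c s := by
  induction l' generalizing G with
  | nil => exact h
  | cons a t ih => exact aux_realize_black (ih h)

lemma aux_realizeSeq_red_origin {G : RBGraph S C} {c s} (l' : List C)
    (h : (realizeSeq G l').red c s) : (∃ s', G.red c s') ∨ c ∈ l' := by
  induction l' generalizing G s with
  | nil => exact Or.inl ⟨s, h⟩
  | cons a t ih =>
      rcases ih (G := realize G a) h with ⟨s', hs'⟩ | hm
      · rcases aux_realize_red hs' with h' | rfl
        · exact Or.inl ⟨s', h'⟩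
        · exact Or.inr List.mem_cons_self
      · exact Or.inr (List.mem_cons_of_mem _ hm)

lemma aux_realize_reach {G : RBGraph S C} {a : C} {x y}
    (h : (realize G a).toSimple.Reachable x y) : G.toSimple.Reachable x y := by
  set G' : RBGraph S C :=
    ⟨fun c' s => G.black c' s ∧ c' ≠ a,
     fun c' s => G.red c' s ∨ (c' = a ∧ ¬ G.black a s ∧ G.sameComp a s)⟩ with hG'
  have h1 : (realize G a).toSimple ≤ G'.toSimple := by
    apply aux_toSimple_le
    intro c s hcs
    exact aux_iter_adj _ hcs
  have h2 : ∀ x y, G'.toSimple.Adj x y → G.toSimple.Reachable x y := by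
    rintro x y (⟨s, c, rfl, rfl, ha⟩ | ⟨s, c, rfl, rfl, ha⟩)
    · rcases ha with hb | hr
      · exact SimpleGraph.Adj.reachable (Or.inl ⟨s, c, rfl, rfl, Or.inl hb.1⟩)
      · rcases hr with hr | ⟨rfl, _, hsc⟩
        · exact SimpleGraph.Adj.reachable (Or.inl ⟨s, c, rfl, rfl, Or.inr hr⟩)
        · exact hsc.symm
    · rcases ha with hb | hr
      · exact SimpleGraph.Adj.reachable (Or.inr ⟨s, c, rfl, rfl, Or.inl hb.1⟩)
      · rcases hr with hr | ⟨rfl, _, hsc⟩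
        · exact SimpleGraph.Adj.reachable (Or.inr ⟨s, c, rfl, rfl, Or.inr hr⟩)
        · exact hsc
  exact aux_reach_of_adj_reach h2 x y (h.mono h1)

lemma aux_realizeSeq_reach {G : RBGraph S C} (l' : List C) {x y}
    (h : (realizeSeq G l').toSimple.Reachable x y) : G.toSimple.Reachable x y := by
  induction l' generalizing G with
  | nil => exact h
  | cons a t ih => exact aux_realize_reach (ih h)

/-- The persistence predicate: `c` still has the red edge to `s`, or is edgeless. -/
def Pers (c : C) (s : S) (G : RBGraph S C) : Prop :=
  G.red c s ∨ ∀ s', ¬ G.adj c s'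

lemma aux_Pers_pruneStep {c : C} {s : S} {G : RBGraph S C} (h : Pers c s G) :
    Pers c s (pruneStep G) := by
  rcases h with hr | he
  · by_cases hu : G.redUniversal c
    · exact Or.inr fun s' ha => (ha.elim (fun h => h.2) fun h => h.2) hu
    · exact Or.inl ⟨hr, hu⟩
  · exact Or.inr fun s' ha => he s' (aux_pruneStep_adj ha)

lemma aux_Pers_iter {c : C} {s : S} {G : RBGraph S C} (h : Pers c s G) (n : ℕ) :
    Pers c s (pruneStep^[n] G) := by
  induction n with
  | zero => exact h
  | succ n ih =>
      rw [Function.iterate_succ_apply']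
      exact aux_Pers_pruneStep ih

lemma aux_Pers_realize {c : C} {s : S} {G : RBGraph S C} (h : Pers c s G) (a : C) :
    Pers c s (realize G a) := by
  apply aux_Pers_iter
  rcases h with hr | he
  · exact Or.inl (Or.inl hr)
  · refine Or.inr fun s' ha => ?_
    rcases ha with ⟨hb, _⟩ | hr
    · exact he s' (Or.inl hb)
    · rcases hr with hr | ⟨rfl, _, hsc⟩
      · exact he s' (Or.inr hr)
      · exact aux_not_reach_of_edgeless G c he s' hsc

lemma aux_Pers_realizeSeq {c : C} {s : S} {G : RBGraph S C} (h : Pers c s G)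
    (l' : List C) : Pers c s (realizeSeq G l') := by
  induction l' generalizing G with
  | nil => exact h
  | cons a t ih => exact ih (aux_Pers_realize h a)

end RBGraph

/-- in a connected partial reduction, every active character was
originally adjacent to every species now incident only to black edges. -/
theorem active_was_adjacent_to_SB {S C : Type} [Fintype C] (M : C → S → Prop)
    (l : List C) (hl : RBGraph.isReduction M l) (k : ℕ) (hk : k ≤ l.length)
    (Gk : RBGraph S C) (hGk : Gk = RBGraph.partialRed M l k)
    (hconn : Gk.singleComponent) :
    ∀ c, Gk.active c → ∀ s ∈ Gk.SB, M c s := by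
  intro c hc s hs
  subst hGk
  obtain ⟨s0, hred⟩ := hc
  have hmem : c ∈ l.take k := by
    rcases RBGraph.aux_realizeSeq_red_origin (l.take k) hred with ⟨s', hs'⟩ | hm
    · exact hs'.elim
    · exact hm
  obtain ⟨l₁, l₂, hsplit⟩ := List.append_of_mem hmem
  set G₁ := RBGraph.realizeSeq (RBGraph.ofMatrix M) l₁ with hG₁
  have hGkeq : RBGraph.partialRed M l k
      = RBGraph.realizeSeq (RBGraph.realize G₁ c) l₂ := by
    rw [RBGraph.partialRed, hsplit, RBGraph.realizeSeq, List.foldl_append]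
    rfl
  by_contra hM
  have hnb : ¬ G₁.black c s := fun h => hM (RBGraph.aux_realizeSeq_black l₁ h)
  obtain ⟨c', hc'⟩ := hs.1
  have hreach : (RBGraph.partialRed M l k).toSimple.Reachable
      (Sum.inr c) (Sum.inl s) :=
    hconn _ _ ⟨s0, Or.inr hred⟩ ⟨c', Or.inl hc'⟩
  have hsc : G₁.sameComp c s := by
    rw [hGkeq] at hreach
    exact RBGraph.aux_realize_reach (RBGraph.aux_realizeSeq_reach l₂ hreach)
  have hP : RBGraph.Pers c s (RBGraph.realize G₁ c) :=
    RBGraph.aux_Pers_iter (Or.inl (Or.inr ⟨rfl, hnb, hsc⟩)) _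
  have hPk : RBGraph.Pers c s (RBGraph.partialRed M l k) := by
    rw [hGkeq]; exact RBGraph.aux_Pers_realizeSeq hP l₂
  rcases hPk with hr | he
  · exact hs.2 c hr
  · exact he s0 (Or.inr hred)
end
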